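/- Let ε > 0 and define κ_ε : (0,∞) → ℝ by κ_ε(s) = Φ( s/2 − ε/s ) − e^ε Φ( −s/2 − ε/s ), where Φ is the standard normal cumulative distribution function. Then: (a) κ_ε is strictly increasing on (0,∞); (b) 0 < κ_ε(s) < 1 for every s > 0; (c) κ_ε(s) → 0 as s → 0⁺ and κ_ε(s) → 1 as s → ∞. Consequently κ_ε is a bijection from (0,∞) onto (0,1) and admits a (strictly increasing) inverse function κ̄_ε : (0,1) → (0,∞). -/

import Mathlib

open Real Filter Set MeasureTheory

/-- The standard normal cumulative distribution function
`Φ(s) = (1/√(2π)) ∫_{-∞}^s e^{-τ²/2} dτ`. -/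
noncomputable def stdNormalCDF (s : ℝ) : ℝ :=
  (Real.sqrt (2 * Real.pi))⁻¹ * ∫ τ in Set.Iic s, Real.exp (-τ ^ 2 / 2)

lemma gauss_integrable : Integrable (fun τ : ℝ => Real.exp (-τ ^ 2 / 2)) := by
  have := integrable_exp_neg_mul_sq (show (0:ℝ) < 1/2 by norm_num)
  convert this using 2 with x
  ring_nf

lemma Phi_hasDerivAt (s : ℝ) :
    HasDerivAt stdNormalCDF ((Real.sqrt (2 * Real.pi))⁻¹ * Real.exp (-s ^ 2 / 2)) s := by
  have hint : ∀ x : ℝ, IntegrableOn (fun τ : ℝ => Real.exp (-τ ^ 2 / 2)) (Iic x) :=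
    fun x => gauss_integrable.integrableOn
  have heq : stdNormalCDF = fun x =>
      (Real.sqrt (2 * Real.pi))⁻¹ * ((∫ τ in Set.Iic (0:ℝ), Real.exp (-τ ^ 2 / 2)) +
        ∫ τ in (0:ℝ)..x, Real.exp (-τ ^ 2 / 2)) := by
    funext x
    rw [stdNormalCDF, ← intervalIntegral.integral_Iic_sub_Iic (hint 0) (hint x)]
    ring
  rw [heq]
  have hcont : Continuous (fun τ : ℝ => Real.exp (-τ ^ 2 / 2)) := by continuity
  have h1 : HasDerivAt (fun x : ℝ => ∫ τ in (0:ℝ)..x, Real.exp (-τ ^ 2 / 2))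
      (Real.exp (-s ^ 2 / 2)) s :=
    intervalIntegral.integral_hasDerivAt_right (gauss_integrable.intervalIntegrable)
      hcont.aestronglyMeasurable.stronglyMeasurableAtFilter hcont.continuousAt
  exact ((h1.const_add _).const_mul _)

lemma Phi_tendsto_atBot : Tendsto stdNormalCDF atBot (nhds 0) := by
  have h : Tendsto (fun n : ℝ => ∫ τ in Iic (-n), Real.exp (-τ ^ 2 / 2)) atTop
      (nhds (∫ τ in ⋂ n : ℝ, Iic (-n), Real.exp (-τ ^ 2 / 2))) := by
    apply tendsto_setIntegral_of_antitone (fun n => measurableSet_Iic)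
    · intro a b hab
      exact Iic_subset_Iic.2 (by linarith)
    · exact ⟨0, gauss_integrable.integrableOn⟩
  have hempty : (⋂ n : ℝ, Iic (-n)) = ∅ := by
    apply eq_empty_of_forall_notMem
    intro x hx
    have := mem_iInter.1 hx (-(x - 1))
    simp at this
    linarith
  rw [hempty] at h
  simp only [Measure.restrict_empty, integral_zero_measure] at h
  have h2 : Tendsto (fun s : ℝ => ∫ τ in Iic s, Real.exp (-τ ^ 2 / 2)) atBot (nhds 0) := by
    have := h.comp tendsto_neg_atBot_atTop
    exact this.congr (fun s => by simp [Function.comp])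
  have : Tendsto stdNormalCDF atBot (nhds ((Real.sqrt (2 * Real.pi))⁻¹ * 0)) :=
    h2.const_mul _
  simpa using this

lemma Phi_tendsto_atTop : Tendsto stdNormalCDF atTop (nhds 1) := by
  have h : Tendsto (fun n : ℝ => ∫ τ in Iic n, Real.exp (-τ ^ 2 / 2)) atTop
      (nhds (∫ τ in ⋃ n : ℝ, Iic n, Real.exp (-τ ^ 2 / 2))) := by
    apply tendsto_setIntegral_of_monotone (fun n => measurableSet_Iic)
    · intro a b hab
      exact Iic_subset_Iic.2 hab
    · exact gauss_integrable.integrableOn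
  have huniv : (⋃ n : ℝ, Iic n) = univ := by
    apply eq_univ_of_forall
    intro x
    exact mem_iUnion.2 ⟨x, self_mem_Iic⟩
  rw [huniv] at h
  have hval : ∫ τ in (univ : Set ℝ), Real.exp (-τ ^ 2 / 2) = Real.sqrt (2 * Real.pi) := by
    rw [MeasureTheory.setIntegral_univ]
    have := integral_gaussian (1/2 : ℝ)
    have heq : ∀ τ : ℝ, Real.exp (-(1/2 : ℝ) * τ ^ 2) = Real.exp (-τ ^ 2 / 2) := by
      intro τ; ring_nf
    rw [show (fun τ : ℝ => Real.exp (-τ ^ 2 / 2)) = fun τ : ℝ => Real.exp (-(1/2:ℝ) * τ ^ 2) by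
      funext τ; rw [heq]]
    rw [this]
    rw [show Real.pi / (1/2 : ℝ) = 2 * Real.pi by ring]
  rw [hval] at h
  have h2 : Tendsto stdNormalCDF atTop
      (nhds ((Real.sqrt (2 * Real.pi))⁻¹ * Real.sqrt (2 * Real.pi))) := h.const_mul _
  have hpos : (0:ℝ) < Real.sqrt (2 * Real.pi) :=
    Real.sqrt_pos.2 (by positivity)
  rwa [inv_mul_cancel₀ hpos.ne'] at h2

/-- `κ_ε(s) = Φ(s/2 - ε/s) - e^ε Φ(-s/2 - ε/s)`. -/
noncomputable def kappa (ε s : ℝ) : ℝ :=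
  stdNormalCDF (s / 2 - ε / s) - Real.exp ε * stdNormalCDF (-s / 2 - ε / s)

lemma kappa_hasDerivAt (ε : ℝ) (hε : 0 < ε) {s : ℝ} (hs : 0 < s) :
    HasDerivAt (kappa ε)
      ((Real.sqrt (2 * Real.pi))⁻¹ * Real.exp (-(s / 2 - ε / s) ^ 2 / 2)) s := by
  have hs0 : s ≠ 0 := hs.ne'
  have ha : HasDerivAt (fun x : ℝ => x / 2 - ε / x) (1/2 + ε / s ^ 2) s := by
    have h1 : HasDerivAt (fun x : ℝ => x / 2) (1/2) s := by
      simpa using (hasDerivAt_id s).div_const 2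
    have h2 : HasDerivAt (fun x : ℝ => ε / x) (-(ε / s ^ 2)) s := by
      have := ((hasDerivAt_id s).inv hs0).const_mul ε
      simpa [div_eq_mul_inv, pow_two] using this
    have := h1.sub h2; rw [sub_neg_eq_add] at this; exact this
  have hb : HasDerivAt (fun x : ℝ => -x / 2 - ε / x) (-(1/2) + ε / s ^ 2) s := by
    have h1 : HasDerivAt (fun x : ℝ => -x / 2) (-(1/2)) s := by
      have := ((hasDerivAt_id s).neg.div_const 2)
      norm_num at this ⊢
      exact this
    have h2 : HasDerivAt (fun x : ℝ => ε / x) (-(ε / s ^ 2)) s := by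
      have := ((hasDerivAt_id s).inv hs0).const_mul ε
      simpa [div_eq_mul_inv, pow_two] using this
    have := h1.sub h2; rw [sub_neg_eq_add] at this; exact this
  have hΦa := (Phi_hasDerivAt (s / 2 - ε / s)).comp s ha
  have hΦb := ((Phi_hasDerivAt (-s / 2 - ε / s)).comp s hb).const_mul (Real.exp ε)
  have h := hΦa.sub hΦb
  have hkey : Real.exp ε * Real.exp (-(-s / 2 - ε / s) ^ 2 / 2) =
      Real.exp (-(s / 2 - ε / s) ^ 2 / 2) := by
    rw [← Real.exp_add]
    congr 1
    field_simp
    ring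
  have hfun : (fun x => (stdNormalCDF ∘ fun x => x / 2 - ε / x) x -
      Real.exp ε * (stdNormalCDF ∘ fun x => -x / 2 - ε / x) x) = kappa ε := by
    funext x; simp [kappa, Function.comp]
  rw [show ((stdNormalCDF ∘ fun x => x / 2 - ε / x) - fun y => Real.exp ε * (stdNormalCDF ∘ fun x => -x / 2 - ε / x) y) = kappa ε from hfun] at h
  refine h.congr_deriv ?_
  rw [show Real.exp ε * ((Real.sqrt (2 * Real.pi))⁻¹ *
      Real.exp (-(-s / 2 - ε / s) ^ 2 / 2) * (-(1/2) + ε / s ^ 2)) =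
    (Real.sqrt (2 * Real.pi))⁻¹ * (Real.exp ε * Real.exp (-(-s / 2 - ε / s) ^ 2 / 2)) *
      (-(1/2) + ε / s ^ 2) by ring, hkey]
  ring

lemma kappa_strictMonoOn (ε : ℝ) (hε : 0 < ε) : StrictMonoOn (kappa ε) (Set.Ioi 0) := by
  apply strictMonoOn_of_deriv_pos (convex_Ioi 0)
  · intro x hx
    exact (kappa_hasDerivAt ε hε hx).continuousAt.continuousWithinAt
  · intro x hx
    rw [interior_Ioi] at hx
    rw [(kappa_hasDerivAt ε hε hx).deriv]
    positivity

lemma kappa_tendsto_zero (ε : ℝ) (hε : 0 < ε) :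
    Tendsto (kappa ε) (nhdsWithin 0 (Set.Ioi 0)) (nhds 0) := by
  have hinv : Tendsto (fun s : ℝ => ε / s) (nhdsWithin 0 (Set.Ioi 0)) atTop := by
    simp_rw [div_eq_mul_inv]
    exact Tendsto.const_mul_atTop hε tendsto_inv_nhdsGT_zero
  have hneg : Tendsto (fun s : ℝ => -(ε / s)) (nhdsWithin 0 (Set.Ioi 0)) atBot :=
    tendsto_neg_atTop_atBot.comp hinv
  have hcont : Tendsto (fun s : ℝ => s / 2) (nhdsWithin 0 (Set.Ioi 0)) (nhds 0) := by
    have : Tendsto (fun s : ℝ => s / 2) (nhds 0) (nhds ((0:ℝ) / 2)) :=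
      (continuous_id.div_const 2).tendsto 0
    simpa using this.mono_left nhdsWithin_le_nhds
  have hbound : ∀ᶠ s in nhdsWithin (0:ℝ) (Set.Ioi 0), s / 2 ≤ 1 := by
    have := hcont.eventually (eventually_le_nhds (by norm_num : (0:ℝ) < 1))
    simpa using this
  have hbound' : ∀ᶠ s in nhdsWithin (0:ℝ) (Set.Ioi 0), -s / 2 ≤ 1 := by
    filter_upwards [self_mem_nhdsWithin] with s hs
    have : (0:ℝ) < s := hs
    nlinarith
  have ha : Tendsto (fun s : ℝ => s / 2 - ε / s) (nhdsWithin 0 (Set.Ioi 0)) atBot := by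
    simp_rw [sub_eq_add_neg]
    exact tendsto_atBot_add_left_of_ge' _ 1 hbound hneg
  have hb : Tendsto (fun s : ℝ => -s / 2 - ε / s) (nhdsWithin 0 (Set.Ioi 0)) atBot := by
    simp_rw [sub_eq_add_neg]
    exact tendsto_atBot_add_left_of_ge' _ 1 hbound' hneg
  have h1 : Tendsto (fun s => stdNormalCDF (s / 2 - ε / s)) (nhdsWithin 0 (Set.Ioi 0))
      (nhds 0) := Phi_tendsto_atBot.comp ha
  have h2 : Tendsto (fun s => stdNormalCDF (-s / 2 - ε / s)) (nhdsWithin 0 (Set.Ioi 0))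
      (nhds 0) := Phi_tendsto_atBot.comp hb
  have := h1.sub (h2.const_mul (Real.exp ε))
  simp only [mul_zero, sub_zero] at this; exact this

lemma kappa_tendsto_one (ε : ℝ) (hε : 0 < ε) :
    Tendsto (kappa ε) atTop (nhds 1) := by
  have hinv : Tendsto (fun s : ℝ => ε / s) atTop (nhds 0) :=
    tendsto_const_nhds.div_atTop tendsto_id
  have hhalf : Tendsto (fun s : ℝ => s / 2) atTop atTop :=
    tendsto_id.atTop_div_const (by norm_num)
  have ha : Tendsto (fun s : ℝ => s / 2 - ε / s) atTop atTop := by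
    have hbound : ∀ᶠ s in atTop, -(ε / s) ≥ -1 := by
      filter_upwards [hinv.eventually (eventually_le_nhds (by norm_num : (0:ℝ) < 1))]
        with s hs
      linarith
    simp_rw [sub_eq_add_neg]
    exact tendsto_atTop_add_right_of_le' _ (-1) hhalf hbound
  have hnhalf : Tendsto (fun s : ℝ => -s / 2) atTop atBot := by
    have := tendsto_neg_atTop_atBot.comp hhalf
    apply this.congr
    intro s; simp [Function.comp]; ring
  have hb : Tendsto (fun s : ℝ => -s / 2 - ε / s) atTop atBot := by
    have hbound : ∀ᶠ s in atTop, -(ε / s) ≤ 1 := by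
      filter_upwards [hinv.eventually (eventually_ge_nhds (by norm_num : (-1:ℝ) < 0))]
        with s hs
      linarith
    simp_rw [sub_eq_add_neg]
    exact tendsto_atBot_add_right_of_ge' _ 1 hnhalf hbound
  have h1 : Tendsto (fun s => stdNormalCDF (s / 2 - ε / s)) atTop (nhds 1) :=
    Phi_tendsto_atTop.comp ha
  have h2 : Tendsto (fun s => stdNormalCDF (-s / 2 - ε / s)) atTop (nhds 0) :=
    Phi_tendsto_atBot.comp hb
  have := h1.sub (h2.const_mul (Real.exp ε))
  simp only [mul_zero, sub_zero] at this; exact this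

/-- For `ε > 0`: (a) `κ_ε` is strictly increasing on `(0, ∞)`;
(b) `0 < κ_ε(s) < 1` for all `s > 0`; (c) `κ_ε(s) → 0` as `s → 0⁺` and `κ_ε(s) → 1`
as `s → ∞`. Consequently `κ_ε` is a bijection from `(0, ∞)` onto `(0, 1)` and admits
a strictly increasing inverse `κ̄_ε : (0,1) → (0,∞)`. -/
theorem stmt12 (ε : ℝ) (hε : 0 < ε) :
    StrictMonoOn (kappa ε) (Set.Ioi 0) ∧
    (∀ s : ℝ, 0 < s → kappa ε s ∈ Set.Ioo (0 : ℝ) 1) ∧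
    Filter.Tendsto (kappa ε) (nhdsWithin 0 (Set.Ioi 0)) (nhds 0) ∧
    Filter.Tendsto (kappa ε) Filter.atTop (nhds 1) ∧
    Set.BijOn (kappa ε) (Set.Ioi 0) (Set.Ioo 0 1) ∧
    ∃ kappaBar : ℝ → ℝ,
      Set.InvOn kappaBar (kappa ε) (Set.Ioi 0) (Set.Ioo 0 1) ∧
      StrictMonoOn kappaBar (Set.Ioo 0 1) := by
  have hmono := kappa_strictMonoOn ε hε
  have h0 := kappa_tendsto_zero ε hε
  have h1 := kappa_tendsto_one ε hε
  have hcont : ContinuousOn (kappa ε) (Set.Ioi 0) := fun x hx =>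
    (kappa_hasDerivAt ε hε hx).continuousAt.continuousWithinAt
  have hlb : ∀ s : ℝ, 0 < s → 0 < kappa ε s := by
    intro s hs
    have h2 : kappa ε (s/2) < kappa ε s :=
      hmono (by simpa using half_pos hs) hs (by linarith)
    have h3 : 0 ≤ kappa ε (s/2) := by
      refine le_of_tendsto h0 ?_
      filter_upwards [Ioo_mem_nhdsGT (half_pos hs)] with t ht
      exact le_of_lt (hmono ht.1 (by simpa using half_pos hs) ht.2)
    linarith
  have hub : ∀ s : ℝ, 0 < s → kappa ε s < 1 := by
    intro s hs
    have h2 : kappa ε s < kappa ε (2*s) := hmono hs (Set.mem_Ioi.mpr (by positivity)) (by linarith)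
    have h3 : kappa ε (2*s) ≤ 1 := by
      refine ge_of_tendsto h1 ?_
      filter_upwards [eventually_ge_atTop (2*s)] with t ht
      rcases eq_or_lt_of_le ht with h | h
      · rw [h]
      · exact le_of_lt (hmono (Set.mem_Ioi.mpr (by positivity)) (Set.mem_Ioi.mpr (lt_trans (by positivity) h)) h)
    linarith
  have hmaps : MapsTo (kappa ε) (Set.Ioi 0) (Set.Ioo 0 1) := fun s hs =>
    ⟨hlb s hs, hub s hs⟩
  have hsurj : SurjOn (kappa ε) (Set.Ioi 0) (Set.Ioo 0 1) := by
    intro y hy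
    obtain ⟨a, ha1, ha2⟩ : ∃ a : ℝ, 0 < a ∧ kappa ε a < y := by
      have hev : ∀ᶠ t in nhdsWithin 0 (Set.Ioi 0), kappa ε t < y :=
        h0.eventually (eventually_lt_nhds hy.1)
      obtain ⟨a, hA, hB⟩ := (hev.and self_mem_nhdsWithin).exists
      exact ⟨a, hB, hA⟩
    obtain ⟨b, hb1, hb2⟩ : ∃ b : ℝ, a < b ∧ y < kappa ε b := by
      have hev : ∀ᶠ t in atTop, y < kappa ε t :=
        h1.eventually (eventually_gt_nhds hy.2)
      obtain ⟨b, hB⟩ := (hev.and (eventually_gt_atTop a)).exists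
      exact ⟨b, hB.2, hB.1⟩
    have hsub : Set.Icc a b ⊆ Set.Ioi 0 := fun x hx => lt_of_lt_of_le ha1 hx.1
    obtain ⟨x, hx, hxy⟩ := intermediate_value_Ioo (le_of_lt hb1) (hcont.mono hsub) ⟨ha2, hb2⟩
    exact ⟨x, lt_trans ha1 hx.1, hxy⟩
  have hbij : Set.BijOn (kappa ε) (Set.Ioi 0) (Set.Ioo 0 1) :=
    ⟨hmaps, hmono.injOn, hsurj⟩
  refine ⟨hmono, fun s hs => ⟨hlb s hs, hub s hs⟩, h0, h1, hbij, ?_⟩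
  refine ⟨Function.invFunOn (kappa ε) (Set.Ioi 0), hbij.invOn_invFunOn, ?_⟩
  intro y1 hy1 y2 hy2 h12
  have hm := hsurj.mapsTo_invFunOn
  have hr := hbij.invOn_invFunOn.2
  have hx1 : Function.invFunOn (kappa ε) (Set.Ioi 0) y1 ∈ Set.Ioi (0:ℝ) := hm hy1
  have hx2 : Function.invFunOn (kappa ε) (Set.Ioi 0) y2 ∈ Set.Ioi (0:ℝ) := hm hy2
  have : kappa ε (Function.invFunOn (kappa ε) (Set.Ioi 0) y1) <
      kappa ε (Function.invFunOn (kappa ε) (Set.Ioi 0) y2) := by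
    rw [hr hy1, hr hy2]; exact h12
  exact (hmono.lt_iff_lt hx1 hx2).mp this
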